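/- Let d ≥ 2, and let C̃ be the packing obtained from the honeycomb circle packing C by moving every center on or above the x-axis up by the vector (0, d), i.e., C̃ = f '' C where f (x, y) = (x, y + d) if y ≥ 0 and f (x, y) = (x, y) otherwise. Then C̃ is not 1-saturated: there exists a point p ∈ EuclideanSpace ℝ (Fin 2) with dist p q ≥ 2 for every q ∈ C̃, so that C̃ ∪ {p} is again a packing. -/

import Mathlib

open RealInnerProductSpace

/-- A (unit) packing in ℝⁿ: a set of centers with pairwise distances at least 2. -/
def IsPacking {n : ℕ} (S : Set (EuclideanSpace ℝ (Fin n))) : Prop :=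
  ∀ p ∈ S, ∀ q ∈ S, p ≠ q → dist p q ≥ 2

/-- The honeycomb circle packing: centers at (2i + j, √3 j) for integers i, j. -/
def honeycomb : Set (EuclideanSpace ℝ (Fin 2)) :=
  {p | ∃ i j : ℤ, p = (WithLp.equiv 2 (Fin 2 → ℝ)).symm ![2 * (i : ℝ) + j, Real.sqrt 3 * j]}

private lemma sq_sum_dist_aux {x y : EuclideanSpace ℝ (Fin 2)}
    (h : 4 ≤ (x 0 - y 0)^2 + (x 1 - y 1)^2) : dist x y ≥ 2 := by
  rw [EuclideanSpace.dist_eq, Fin.sum_univ_two]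
  rw [ge_iff_le, show (2:ℝ) = Real.sqrt 4 by
    rw [show (4:ℝ) = 2^2 by norm_num, Real.sqrt_sq (by norm_num : (0:ℝ) ≤ 2)]]
  apply Real.sqrt_le_sqrt
  simpa [Real.dist_eq, sq_abs] using h

private lemma int_key_aux (a b : ℤ) (h : ¬(a = 0 ∧ b = 0)) :
    4 ≤ (2*a+b)^2 + 3*b^2 := by
  have hb : b = 0 ∨ b = 1 ∨ b = -1 ∨ 2 ≤ b ∨ b ≤ -2 := by omega
  rcases hb with rfl | rfl | rfl | hb | hb
  · have ha : a ≤ -1 ∨ 1 ≤ a := by omega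
    rcases ha with ha | ha <;> nlinarith
  · have h1 : 2*a+1 ≤ -1 ∨ 1 ≤ 2*a+1 := by omega
    rcases h1 with h1 | h1 <;> nlinarith
  · have h1 : 2*a-1 ≤ -1 ∨ 1 ≤ 2*a-1 := by omega
    rcases h1 with h1 | h1 <;> nlinarith
  · nlinarith
  · nlinarith

private lemma real_key_aux (a b : ℤ) (h : ¬(a = 0 ∧ b = 0)) :
    (4:ℝ) ≤ (2*(a:ℝ)+(b:ℝ))^2 + (Real.sqrt 3 * (b:ℝ))^2 := by
  have h3 : (Real.sqrt 3)^2 = 3 := Real.sq_sqrt (by norm_num)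
  have h1 := int_key_aux a b h
  have h2 : (4:ℝ) ≤ (2*(a:ℝ)+b)^2 + 3*(b:ℝ)^2 := by exact_mod_cast h1
  rw [mul_pow, h3]
  linarith

/-- If the gap has width d ≥ 2, the honeycomb packing with a gap defect along the x-axis
is not even 1-saturated: an extra circle fits in the gap. -/
theorem honeycomb_wide_gap_not_one_saturated (d : ℝ) (hd : 2 ≤ d)
    (f : EuclideanSpace ℝ (Fin 2) → EuclideanSpace ℝ (Fin 2))
    (hf : ∀ x, f x = if x 1 ≥ 0 then (WithLp.equiv 2 (Fin 2 → ℝ)).symm ![x 0, x 1 + d] else x) :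
    ∃ p : EuclideanSpace ℝ (Fin 2), (∀ q ∈ f '' honeycomb, dist p q ≥ 2) ∧
      IsPacking (f '' honeycomb ∪ {p}) := by
  have h3 : (0:ℝ) < Real.sqrt 3 := Real.sqrt_pos.mpr (by norm_num)
  -- characterization of points of the moved packing
  have hchar : ∀ q ∈ f '' honeycomb, ∃ i j : ℤ, q 0 = 2*(i:ℝ)+(j:ℝ) ∧
      ((0 ≤ j ∧ q 1 = Real.sqrt 3 * j + d) ∨ (j < 0 ∧ q 1 = Real.sqrt 3 * j)) := by
    rintro q ⟨r, ⟨i, j, rfl⟩, rfl⟩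
    have hr0 : ((WithLp.equiv 2 (Fin 2 → ℝ)).symm ![2*(i:ℝ)+j, Real.sqrt 3 * j]) 0
        = 2*(i:ℝ)+j := rfl
    have hr1 : ((WithLp.equiv 2 (Fin 2 → ℝ)).symm ![2*(i:ℝ)+j, Real.sqrt 3 * j]) 1
        = Real.sqrt 3 * j := rfl
    refine ⟨i, j, ?_⟩
    rw [hf, hr1]
    by_cases hj : 0 ≤ j
    · have : Real.sqrt 3 * (j:ℝ) ≥ 0 :=
        mul_nonneg h3.le (by exact_mod_cast hj)
      rw [if_pos this]
      exact ⟨rfl, Or.inl ⟨hj, rfl⟩⟩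
    · push_neg at hj
      have : ¬ (Real.sqrt 3 * (j:ℝ) ≥ 0) := by
        push_neg
        have : ((j:ℝ)) < 0 := by exact_mod_cast hj
        exact mul_neg_of_pos_of_neg h3 this
      rw [if_neg this]
      exact ⟨hr0, Or.inr ⟨hj, hr1⟩⟩
  -- the point at the origin is ≥ 2 from everything
  have hzero : ∀ q ∈ f '' honeycomb, dist (0 : EuclideanSpace ℝ (Fin 2)) q ≥ 2 := by
    intro q hq
    obtain ⟨i, j, h0, hcase⟩ := hchar q hq
    apply sq_sum_dist_aux
    have hz0 : (0 : EuclideanSpace ℝ (Fin 2)) 0 = 0 := rfl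
    have hz1 : (0 : EuclideanSpace ℝ (Fin 2)) 1 = 0 := rfl
    rw [hz0, hz1, h0]
    rcases hcase with ⟨hj, h1⟩ | ⟨hj, h1⟩
    · rw [h1]
      have hjr : (0:ℝ) ≤ (j:ℝ) := by exact_mod_cast hj
      have h1' : Real.sqrt 3 * (j:ℝ) ≥ 0 := mul_nonneg h3.le hjr
      nlinarith [sq_nonneg (2*(i:ℝ)+j)]
    · rw [h1]
      have := real_key_aux i j (by intro h; omega)
      nlinarith
  -- pairwise distances within the moved packing
  have hpair : ∀ q ∈ f '' honeycomb, ∀ q' ∈ f '' honeycomb, q ≠ q' → dist q q' ≥ 2 := by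
    intro q hq q' hq' hne
    obtain ⟨i, j, h0, hcase⟩ := hchar q hq
    obtain ⟨i', j', h0', hcase'⟩ := hchar q' hq'
    apply sq_sum_dist_aux
    have hne2 : ¬ (i - i' = 0 ∧ j - j' = 0) := by
      rintro ⟨hi, hj⟩
      have hi' : i = i' := by omega
      have hj' : j = j' := by omega
      apply hne
      subst hi' hj'
      have e1 : q 1 = q' 1 := by
        rcases hcase with ⟨hj1, h1⟩ | ⟨hj1, h1⟩ <;> rcases hcase' with ⟨hj2, h2⟩ | ⟨hj2, h2⟩ <;>
          first | omega | (rw [h1, h2])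
      have e0 : q 0 = q' 0 := by rw [h0, h0']
      ext k
      fin_cases k
      · exact e0
      · exact e1
    rcases hcase with ⟨hj1, h1⟩ | ⟨hj1, h1⟩ <;> rcases hcase' with ⟨hj2, h2⟩ | ⟨hj2, h2⟩
    · -- both moved: translation invariant
      have key := real_key_aux (i - i') (j - j') hne2
      push_cast at key
      rw [h0, h0', h1, h2]
      nlinarith
    · -- q moved up, q' below: vertical gap ≥ d ≥ 2
      rw [h0, h0', h1, h2]
      have a1 : Real.sqrt 3 * (j:ℝ) ≥ 0 :=
        mul_nonneg h3.le (by exact_mod_cast hj1)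
      have a2 : Real.sqrt 3 * (j':ℝ) ≤ 0 := by
        have : ((j':ℝ)) ≤ 0 := by exact_mod_cast hj2.le
        exact mul_nonpos_of_nonneg_of_nonpos h3.le this
      nlinarith [sq_nonneg (2*(i:ℝ)+j - (2*(i':ℝ)+j'))]
    · rw [h0, h0', h1, h2]
      have a1 : Real.sqrt 3 * (j':ℝ) ≥ 0 :=
        mul_nonneg h3.le (by exact_mod_cast hj2)
      have a2 : Real.sqrt 3 * (j:ℝ) ≤ 0 := by
        have : ((j:ℝ)) ≤ 0 := by exact_mod_cast hj1.le
        exact mul_nonpos_of_nonneg_of_nonpos h3.le this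
      nlinarith [sq_nonneg (2*(i:ℝ)+j - (2*(i':ℝ)+j'))]
    · -- both unmoved
      have key := real_key_aux (i - i') (j - j') hne2
      push_cast at key
      rw [h0, h0', h1, h2]
      nlinarith
  refine ⟨0, hzero, ?_⟩
  intro a ha b hb hab
  rcases ha with ha | ha <;> rcases hb with hb | hb
  · exact hpair a ha b hb hab
  · rw [Set.mem_singleton_iff] at hb
    subst hb
    rw [dist_comm]
    exact hzero a ha
  · rw [Set.mem_singleton_iff] at ha
    subst ha
    exact hzero b hb
  · rw [Set.mem_singleton_iff] at ha hb
    exact absurd (ha.trans hb.symm) hab
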